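/- Let r, a, b ≥ 0 be natural numbers. Let α : ℂ[x₁,…,x₆] → ℂ[y₁^{±1}, y₂^{±1}, y₃^{±1}] be the ℂ-algebra homomorphism determined by α(x₁) = y₁, α(x₂) = y₁, α(x₃) = y₁^{−r}y₂, α(x₄) = y₂, α(x₅) = y₁^{−a}y₂^{−b}y₃, α(x₆) = y₃. Then the kernel of α equals the ideal generated by the three binomials x₁ − x₂, x₂^r x₃ − x₄, and x₂^{a+br} x₃^b x₅ − x₆. -/

import Mathlib

open MvPolynomial

/-- The Laurent monomial `y₁^{v 0} y₂^{v 1} y₃^{v 2}` in the Laurent polynomial ring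
`ℂ[y₁^{±1}, y₂^{±1}, y₃^{±1}]`, realized as `AddMonoidAlgebra ℂ (Fin 3 → ℤ)`. -/
noncomputable def laurentMonomial3 (v : Fin 3 → ℤ) : AddMonoidAlgebra ℂ (Fin 3 → ℤ) :=
  AddMonoidAlgebra.single v 1

lemma lm_mul (u w : Fin 3 → ℤ) :
    laurentMonomial3 u * laurentMonomial3 w = laurentMonomial3 (u + w) := by
  simp [laurentMonomial3, AddMonoidAlgebra.single_mul_single]

lemma lm_pow (n : ℕ) (u : Fin 3 → ℤ) :
    laurentMonomial3 u ^ n = laurentMonomial3 (n • u) := by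
  simp [laurentMonomial3, AddMonoidAlgebra.single_pow]

/-- The injective additive map on exponents. -/
noncomputable def F3 (r a b : ℕ) : (Fin 3 →₀ ℕ) →+ (Fin 3 → ℤ) where
  toFun d := ![(d 0 : ℤ) - r * d 1 - a * d 2, (d 1 : ℤ) - b * d 2, (d 2 : ℤ)]
  map_zero' := by funext i; fin_cases i <;> simp
  map_add' d e := by
    funext i
    fin_cases i <;> simp <;> ring

lemma F3_injective (r a b : ℕ) : Function.Injective (F3 r a b) := by
  intro d e h
  have h0 := congrFun h 0
  have h1 := congrFun h 1
  have h2 := congrFun h 2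
  simp [F3] at h0 h1 h2
  have e2 : (d 2 : ℤ) = e 2 := by exact_mod_cast h2
  rw [e2] at h1
  have e1 : (d 1 : ℤ) = e 1 := by linarith
  rw [e1, e2] at h0
  have e0 : (d 0 : ℤ) = e 0 := by linarith
  ext i
  fin_cases i <;> [exact_mod_cast e0; exact_mod_cast e1; exact_mod_cast e2]

theorem toric_ideal_case_3_0_1 (r a b : ℕ) :
    RingHom.ker (MvPolynomial.aeval
        ![laurentMonomial3 ![1, 0, 0], laurentMonomial3 ![1, 0, 0],
          laurentMonomial3 ![-(r : ℤ), 1, 0], laurentMonomial3 ![0, 1, 0],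
          laurentMonomial3 ![-(a : ℤ), -(b : ℤ), 1], laurentMonomial3 ![0, 0, 1]] :
      MvPolynomial (Fin 6) ℂ →ₐ[ℂ] AddMonoidAlgebra ℂ (Fin 3 → ℤ)) =
    Ideal.span {(X 0 - X 1 : MvPolynomial (Fin 6) ℂ),
      X 1 ^ r * X 2 - X 3, X 1 ^ (a + b * r) * X 2 ^ b * X 4 - X 5} := by
  set v : Fin 6 → AddMonoidAlgebra ℂ (Fin 3 → ℤ) :=
    ![laurentMonomial3 ![1, 0, 0], laurentMonomial3 ![1, 0, 0],
      laurentMonomial3 ![-(r : ℤ), 1, 0], laurentMonomial3 ![0, 1, 0],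
      laurentMonomial3 ![-(a : ℤ), -(b : ℤ), 1], laurentMonomial3 ![0, 0, 1]] with hv
  set α : MvPolynomial (Fin 6) ℂ →ₐ[ℂ] AddMonoidAlgebra ℂ (Fin 3 → ℤ) := aeval v with hα
  set I : Ideal (MvPolynomial (Fin 6) ℂ) := Ideal.span {(X 0 - X 1 : MvPolynomial (Fin 6) ℂ),
      X 1 ^ r * X 2 - X 3, X 1 ^ (a + b * r) * X 2 ^ b * X 4 - X 5} with hI
  have key2 : v 1 ^ r * v 2 = v 3 := by
    show laurentMonomial3 _ ^ r * laurentMonomial3 _ = laurentMonomial3 _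
    rw [lm_pow, lm_mul]
    congr 1
    funext i; fin_cases i <;> simp
  have key3 : v 1 ^ (a + b * r) * v 2 ^ b * v 4 = v 5 := by
    show laurentMonomial3 _ ^ _ * laurentMonomial3 _ ^ _ * laurentMonomial3 _ = laurentMonomial3 _
    rw [lm_pow, lm_pow, lm_mul, lm_mul]
    congr 1
    funext i; fin_cases i <;> simp
  apply le_antisymm
  · -- ker α ≤ I
    intro p hp
    rw [RingHom.mem_ker] at hp
    set ι : Fin 3 → Fin 6 := ![1, 2, 4] with hι
    set ψ : Fin 6 → MvPolynomial (Fin 3) ℂ :=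
      ![X 0, X 0, X 1, X 0 ^ r * X 1, X 2, X 0 ^ (a + b * r) * X 1 ^ b * X 2] with hψ
    have mem1 : (X 0 - X 1 : MvPolynomial (Fin 6) ℂ) ∈ I := Ideal.subset_span (by simp)
    have mem2 : (X 1 ^ r * X 2 - X 3 : MvPolynomial (Fin 6) ℂ) ∈ I :=
      Ideal.subset_span (by simp)
    have mem3 : (X 1 ^ (a + b * r) * X 2 ^ b * X 4 - X 5 : MvPolynomial (Fin 6) ℂ) ∈ I :=
      Ideal.subset_span (by simp)
    have claimA : (Ideal.Quotient.mkₐ ℂ I).comp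
        ((rename ι).comp (aeval ψ)) = Ideal.Quotient.mkₐ ℂ I := by
      apply MvPolynomial.algHom_ext
      intro i
      simp only [AlgHom.comp_apply, aeval_X, Ideal.Quotient.mkₐ_eq_mk]
      rw [Ideal.Quotient.mk_eq_mk_iff_sub_mem]
      fin_cases i
      · -- X0 ↦ X1 : need X1 - X0 ∈ I
        simpa [hψ, hι, neg_sub] using neg_mem mem1
      · simp [hψ, hι]
      · simp [hψ, hι]
      · simpa [hψ, hι] using mem2
      · simp [hψ, hι]
      · show (rename ι) (X 0 ^ (a + b * r) * X 1 ^ b * X 2) - X 5 ∈ I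
        simpa [hι] using mem3
    have claimB : α.comp ((rename ι).comp (aeval ψ)) = α := by
      apply MvPolynomial.algHom_ext
      intro i
      simp only [AlgHom.comp_apply, aeval_X]
      fin_cases i
      · show α ((rename ι) (X 0)) = α (X 0)
        simp only [rename_X, hα, aeval_X]; rfl
      · show α ((rename ι) (X 0)) = α (X 1)
        simp only [rename_X, hα, aeval_X]; rfl
      · show α ((rename ι) (X 1)) = α (X 2)
        simp only [rename_X, hα, aeval_X]; rfl
      · show α ((rename ι) (X 0 ^ r * X 1)) = α (X 3)
        simp only [map_mul, map_pow, rename_X, hα, aeval_X]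
        exact key2
      · show α ((rename ι) (X 2)) = α (X 4)
        simp only [rename_X, hα, aeval_X]; rfl
      · show α ((rename ι) (X 0 ^ (a + b * r) * X 1 ^ b * X 2)) = α (X 5)
        simp only [map_mul, map_pow, rename_X, hα, aeval_X]
        exact key3
    have claimC : α.comp (rename ι) = AddMonoidAlgebra.mapDomainAlgHom ℂ ℂ (F3 r a b) := by
      apply MvPolynomial.algHom_ext
      intro i
      simp only [AlgHom.comp_apply, rename_X, hα, aeval_X]
      rw [eq_comm]
      refine (AddMonoidAlgebra.mapDomainAlgHom_apply ℂ ℂ (F3 r a b) (X i)).trans ?_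
      refine (AddMonoidAlgebra.mapDomain_single (f := ⇑(F3 r a b))
        (a := Finsupp.single i 1) (r := (1 : ℂ))).trans ?_
      show AddMonoidAlgebra.single _ _ = _
      fin_cases i <;>
        · show AddMonoidAlgebra.single _ _ = laurentMonomial3 _
          unfold laurentMonomial3
          congr 1
          funext j; fin_cases j <;> simp [F3, Finsupp.single_apply]
    have h1 : α ((rename ι) (aeval ψ p)) = 0 := by
      have := DFunLike.congr_fun claimB p
      simpa using this.trans hp
    have h3 : (AddMonoidAlgebra.mapDomainAlgHom ℂ ℂ (F3 r a b)) (aeval ψ p) = 0 := by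
      have h2 := DFunLike.congr_fun claimC (aeval ψ p)
      simp only [AlgHom.comp_apply] at h2
      exact h2.symm.trans h1
    have hq0 : aeval ψ p = 0 := by
      refine AddMonoidAlgebra.mapDomain_injective (F3_injective r a b) ?_
      rw [AddMonoidAlgebra.mapDomain_zero]
      simpa only [AddMonoidAlgebra.mapDomainAlgHom_apply] using h3
    have hmk := DFunLike.congr_fun claimA p
    simp only [AlgHom.comp_apply, Ideal.Quotient.mkₐ_eq_mk, hq0, map_zero] at hmk
    rw [← Ideal.Quotient.eq_zero_iff_mem, ← hmk]
  · rw [hI, Ideal.span_le]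
    rintro q hq
    simp only [Set.mem_insert_iff, Set.mem_singleton_iff] at hq
    rcases hq with rfl | rfl | rfl <;>
      simp only [SetLike.mem_coe, RingHom.mem_ker, map_sub, map_mul, map_pow, hα, aeval_X]
    · show v 0 - v 1 = 0
      simp [hv]
    · rw [key2, sub_self]
    · rw [key3, sub_self]
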